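/- (Linearity) Let (X, 𝒜, μ) be a monotone measure space with μ subadditive. Then the pan-integral on real-valued functions is linear: for all measurable pan-integrable f, g : X → ℝ and all α, β ∈ ℝ, the function αf + βg is pan-integrable and ∫^pan (αf + βg) dμ = α ∫^pan f dμ + β ∫^pan g dμ. -/

import Mathlib

open Set Filter
open scoped ENNReal NNReal Topology

variable {X : Type*}

/-- A monotone measure: vanishes on the empty set, positive on the whole space,
and monotone on measurable sets. -/
structure MonotoneMeasure [MeasurableSpace X] (mu : Set X → ℝ≥0∞) : Prop where
  empty : mu ∅ = 0
  univ_pos : 0 < mu Set.univ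
  mono : ∀ ⦃A B : Set X⦄, MeasurableSet A → MeasurableSet B → A ⊆ B → mu A ≤ mu B

/-- A finite measurable partition of `X`. -/
def IsPanPartition [MeasurableSpace X] {n : ℕ} (A : Fin n → Set X) : Prop :=
  (∀ i, MeasurableSet (A i)) ∧ Pairwise (Function.onFun Disjoint A) ∧ (⋃ i, A i) = Set.univ

/-- The `(+,·)`-based pan-integral of a nonnegative function on `X`. -/
noncomputable def panIntegral [MeasurableSpace X] (mu : Set X → ℝ≥0∞) (f : X → ℝ≥0∞) : ℝ≥0∞ :=
  ⨆ (n : ℕ) (A : Fin n → Set X) (_ : IsPanPartition A) (lam : Fin n → ℝ≥0)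
    (_ : ∀ x, ∑ i, Set.indicator (A i) (fun _ => (lam i : ℝ≥0∞)) x ≤ f x),
    ∑ i, (lam i : ℝ≥0∞) * mu (A i)

/-- The pan-integral of `f` on a set `A`, i.e. the pan-integral of `f·χ_A` on `X`. -/
noncomputable def panIntegralOn [MeasurableSpace X] (mu : Set X → ℝ≥0∞) (f : X → ℝ≥0∞)
    (A : Set X) : ℝ≥0∞ :=
  panIntegral mu (A.indicator f)

/-- Subadditivity of a set function. -/
def PanSubadditive [MeasurableSpace X] (mu : Set X → ℝ≥0∞) : Prop :=
  ∀ ⦃A B : Set X⦄, MeasurableSet A → MeasurableSet B → mu (A ∪ B) ≤ mu A + mu B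

/-- Null-additivity of a set function. -/
def PanNullAdditive [MeasurableSpace X] (mu : Set X → ℝ≥0∞) : Prop :=
  ∀ ⦃A B : Set X⦄, MeasurableSet A → MeasurableSet B → mu B = 0 → mu (A ∪ B) = mu A

/-- Continuity from below of a set function. -/
def PanContinuousFromBelow [MeasurableSpace X] (mu : Set X → ℝ≥0∞) : Prop :=
  ∀ E : ℕ → Set X, (∀ n, MeasurableSet (E n)) → Monotone E →
    Filter.Tendsto (fun n => mu (E n)) Filter.atTop (nhds (mu (⋃ n, E n)))

/-- A real-valued function is pan-integrable if the pan-integrals of its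
positive and negative parts are both finite. -/
def PanIntegrable [MeasurableSpace X] (mu : Set X → ℝ≥0∞) (f : X → ℝ) : Prop :=
  panIntegral mu (fun x => ENNReal.ofReal (f x)) < ⊤ ∧
    panIntegral mu (fun x => ENNReal.ofReal (-f x)) < ⊤

/-- The symmetric pan-integral of a real-valued function:
`∫ f⁺ dμ − ∫ f⁻ dμ`. -/
noncomputable def panIntegralReal [MeasurableSpace X] (mu : Set X → ℝ≥0∞) (f : X → ℝ) : ℝ :=
  (panIntegral mu (fun x => ENNReal.ofReal (f x))).toReal -
    (panIntegral mu (fun x => ENNReal.ofReal (-f x))).toReal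

/-- The `‖·‖_{μ,p}` functional: `(∫_E^pan |f|^p dμ)^(1/p)`. -/
noncomputable def panNorm [MeasurableSpace X] (mu : Set X → ℝ≥0∞) (E : Set X) (p : ℝ)
    (f : X → ℝ) : ℝ≥0∞ :=
  (panIntegralOn mu (fun x => ENNReal.ofReal (|f x| ^ p)) E) ^ (1 / p)

section Helpers
set_option linter.unusedSectionVars false

variable [MeasurableSpace X] {mu : Set X → ℝ≥0∞}

/-- Sum of indicators over a pairwise disjoint family is bounded by `F` if each
weight is a lower bound of `F` on its set. -/
lemma pan_sum_indicator_le {ι : Type*} [Fintype ι] (R : ι → Set X)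
    (hd : Pairwise (Function.onFun Disjoint R)) (w : ι → ℝ≥0) (F : X → ℝ≥0∞)
    (hw : ∀ j x, x ∈ R j → (w j : ℝ≥0∞) ≤ F x) (x : X) :
    ∑ j, Set.indicator (R j) (fun _ => (w j : ℝ≥0∞)) x ≤ F x := by
  classical
  by_cases hx : ∃ j, x ∈ R j
  · obtain ⟨j0, hj0⟩ := hx
    rw [Finset.sum_eq_single j0]
    · rw [Set.indicator_of_mem hj0]; exact hw j0 x hj0
    · intro j _ hne
      refine Set.indicator_of_notMem (fun hxj => ?_) _
      exact Set.disjoint_left.mp (hd hne) hxj hj0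
    · intro h; exact absurd (Finset.mem_univ j0) h
  · push_neg at hx
    rw [Finset.sum_eq_zero (fun j _ => Set.indicator_of_notMem (hx j) _)]
    exact zero_le

/-- Finite subadditivity of a subadditive monotone measure. -/
lemma pan_mu_biUnion_le (hmu : MonotoneMeasure mu) (hsub : PanSubadditive mu)
    {ι : Type*} (A : ι → Set X) (hA : ∀ i, MeasurableSet (A i)) (s : Finset ι) :
    mu (⋃ i ∈ s, A i) ≤ ∑ i ∈ s, mu (A i) := by
  classical
  induction s using Finset.induction with
  | empty => simp [hmu.empty]
  | @insert a s hni ih =>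
    rw [Finset.set_biUnion_insert, Finset.sum_insert hni]
    refine le_trans (hsub (hA a) (s.measurableSet_biUnion (fun i _ => hA i))) ?_
    exact add_le_add_right ih _

lemma pan_mu_iUnion_le (hmu : MonotoneMeasure mu) (hsub : PanSubadditive mu)
    {ι : Type*} [Fintype ι] (A : ι → Set X) (hA : ∀ i, MeasurableSet (A i)) :
    mu (⋃ i, A i) ≤ ∑ i, mu (A i) := by
  have := pan_mu_biUnion_le hmu hsub A hA Finset.univ
  simpa using this

/-- Any admissible finite measurable partition (over any finite index type) gives a
lower bound for the pan-integral. -/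
lemma pan_le_panIntegral {ι : Type*} [Fintype ι] (f : X → ℝ≥0∞) (A : ι → Set X)
    (hmeas : ∀ i, MeasurableSet (A i)) (hdisj : Pairwise (Function.onFun Disjoint A))
    (hcov : (⋃ i, A i) = Set.univ) (w : ι → ℝ≥0)
    (hle : ∀ x, ∑ i, Set.indicator (A i) (fun _ => (w i : ℝ≥0∞)) x ≤ f x) :
    ∑ i, (w i : ℝ≥0∞) * mu (A i) ≤ panIntegral mu f := by
  classical
  set n := Fintype.card ι with hn
  set e : Fin n ≃ ι := (Fintype.equivFin ι).symm with he
  have hU : (⋃ i, A (e i)) = Set.univ := by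
    rw [← hcov]
    ext x
    simp only [Set.mem_iUnion]
    exact ⟨fun ⟨i, h⟩ => ⟨e i, h⟩, fun ⟨j, h⟩ => ⟨e.symm j, by simpa using h⟩⟩
  have hpart : IsPanPartition (A ∘ e) := by
    refine ⟨fun i => hmeas _, ?_, hU⟩
    intro i j hne
    exact hdisj (fun h => hne (e.injective h))
  have hle' : ∀ x, ∑ i, Set.indicator ((A ∘ e) i) (fun _ => ((w ∘ e) i : ℝ≥0∞)) x ≤ f x := by
    intro x
    exact le_of_eq_of_le (Fintype.sum_equiv e _ _ fun _ => rfl) (hle x)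
  have hval : ∑ i, ((w ∘ e) i : ℝ≥0∞) * mu ((A ∘ e) i) = ∑ i, (w i : ℝ≥0∞) * mu (A i) :=
    Fintype.sum_equiv e _ _ (fun i => rfl)
  rw [panIntegral]
  exact le_iSup_of_le n (le_iSup_of_le (A ∘ e) (le_iSup_of_le hpart
    (le_iSup_of_le (w ∘ e) (le_iSup_of_le hle' (le_of_eq hval.symm)))))

lemma pan_panIntegral_mono {f g : X → ℝ≥0∞} (h : ∀ x, f x ≤ g x) :
    panIntegral mu f ≤ panIntegral mu g := by
  rw [panIntegral]
  refine iSup_le fun n => iSup_le fun A => iSup_le fun hp => iSup_le fun lam =>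
    iSup_le fun hle => ?_
  exact pan_le_panIntegral g A hp.1 hp.2.1 hp.2.2 lam (fun x => (hle x).trans (h x))

lemma pan_panIntegral_zero (hmu : MonotoneMeasure mu) :
    panIntegral mu (fun _ => (0 : ℝ≥0∞)) = 0 := by
  rw [panIntegral]
  refine le_antisymm ?_ (zero_le)
  refine iSup_le fun n => iSup_le fun A => iSup_le fun hp => iSup_le fun lam =>
    iSup_le fun hle => le_of_eq ?_
  refine Finset.sum_eq_zero fun i _ => ?_
  rcases Set.eq_empty_or_nonempty (A i) with hAi | ⟨x, hx⟩
  · rw [hAi, hmu.empty, mul_zero]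
  · have h1 : (lam i : ℝ≥0∞) ≤ 0 := by
      have h2 := hle x
      have h3 : Set.indicator (A i) (fun _ => (lam i : ℝ≥0∞)) x ≤ 0 := by
        refine le_trans ?_ h2
        exact Finset.single_le_sum (f := fun j => Set.indicator (A j)
          (fun _ => (lam j : ℝ≥0∞)) x) (fun j _ => zero_le) (Finset.mem_univ i)
      rwa [Set.indicator_of_mem hx] at h3
    rw [le_zero_iff] at h1
    rw [h1, zero_mul]

lemma pan_panIntegral_smul (hmu : MonotoneMeasure mu) (c : ℝ≥0) (F : X → ℝ≥0∞) :
    panIntegral mu (fun x => (c : ℝ≥0∞) * F x) = (c : ℝ≥0∞) * panIntegral mu F := by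
  classical
  have key : ∀ (d : ℝ≥0) (G : X → ℝ≥0∞),
      (d : ℝ≥0∞) * panIntegral mu G ≤ panIntegral mu (fun x => (d : ℝ≥0∞) * G x) := by
    intro d G
    rw [panIntegral, ENNReal.mul_iSup]
    refine iSup_le fun n => ?_
    rw [ENNReal.mul_iSup]
    refine iSup_le fun A => ?_
    rw [ENNReal.mul_iSup]
    refine iSup_le fun hp => ?_
    rw [ENNReal.mul_iSup]
    refine iSup_le fun lam => ?_
    rw [ENNReal.mul_iSup]
    refine iSup_le fun hle => ?_
    have hval : (d : ℝ≥0∞) * ∑ i, (lam i : ℝ≥0∞) * mu (A i)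
        = ∑ i, ((d * lam i : ℝ≥0) : ℝ≥0∞) * mu (A i) := by
      rw [Finset.mul_sum]
      exact Finset.sum_congr rfl fun i _ => by rw [ENNReal.coe_mul, mul_assoc]
    rw [hval]
    refine pan_le_panIntegral _ A hp.1 hp.2.1 hp.2.2 _ (fun x => ?_)
    calc ∑ i, Set.indicator (A i) (fun _ => ((d * lam i : ℝ≥0) : ℝ≥0∞)) x
        = (d : ℝ≥0∞) * ∑ i, Set.indicator (A i) (fun _ => (lam i : ℝ≥0∞)) x := by
          rw [Finset.mul_sum]
          refine Finset.sum_congr rfl fun i _ => ?_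
          by_cases hx : x ∈ A i
          · rw [Set.indicator_of_mem hx, Set.indicator_of_mem hx, ENNReal.coe_mul]
          · rw [Set.indicator_of_notMem hx, Set.indicator_of_notMem hx, mul_zero]
      _ ≤ (d : ℝ≥0∞) * G x := mul_le_mul_right (hle x) _
  rcases eq_or_ne c 0 with rfl | hc
  · simp only [ENNReal.coe_zero, zero_mul]
    exact pan_panIntegral_zero hmu
  · refine le_antisymm ?_ (key c F)
    have h2 := key c⁻¹ (fun x => (c : ℝ≥0∞) * F x)
    have h3 : (fun x => ((c⁻¹ : ℝ≥0) : ℝ≥0∞) * ((c : ℝ≥0∞) * F x)) = F := by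
      funext x
      rw [← mul_assoc, ← ENNReal.coe_mul, inv_mul_cancel₀ hc, ENNReal.coe_one, one_mul]
    rw [h3] at h2
    calc panIntegral mu (fun x => (c : ℝ≥0∞) * F x)
        = (c : ℝ≥0∞) * (((c⁻¹ : ℝ≥0) : ℝ≥0∞) * panIntegral mu (fun x => (c : ℝ≥0∞) * F x)) := by
          rw [← mul_assoc, ← ENNReal.coe_mul, mul_inv_cancel₀ hc, ENNReal.coe_one, one_mul]
      _ ≤ (c : ℝ≥0∞) * panIntegral mu F := mul_le_mul_right h2 _

end Helpers

section Additivity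
set_option linter.unusedSectionVars false
set_option maxHeartbeats 1000000

variable [MeasurableSpace X] {mu : Set X → ℝ≥0∞}

open scoped Classical in
/-- Value of a candidate partition datum, or `0` if not admissible. -/
noncomputable def panVal (mu : Set X → ℝ≥0∞) (f : X → ℝ≥0∞)
    (p : Σ n : ℕ, (Fin n → Set X) × (Fin n → ℝ≥0)) : ℝ≥0∞ :=
  if IsPanPartition p.2.1 ∧
      (∀ x, ∑ i, Set.indicator (p.2.1 i) (fun _ => (p.2.2 i : ℝ≥0∞)) x ≤ f x) then
    ∑ i, (p.2.2 i : ℝ≥0∞) * mu (p.2.1 i)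
  else 0

lemma panIntegral_eq_iSup_panVal (f : X → ℝ≥0∞) :
    panIntegral mu f = ⨆ p, panVal mu f p := by
  classical
  refine le_antisymm ?_ ?_
  · rw [panIntegral]
    refine iSup_le fun n => iSup_le fun A => iSup_le fun hp => iSup_le fun lam =>
      iSup_le fun hle => ?_
    refine le_iSup_of_le ⟨n, A, lam⟩ ?_
    rw [panVal, if_pos ⟨hp, hle⟩]
  · refine iSup_le fun p => ?_
    rw [panVal]
    split_ifs with h
    · exact pan_le_panIntegral f p.2.1 h.1.1 h.1.2.1 h.1.2.2 p.2.2 h.2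
    · exact zero_le

lemma pan_panIntegral_superadd (hmu : MonotoneMeasure mu) (hsub : PanSubadditive mu)
    (F G : X → ℝ≥0∞) :
    panIntegral mu F + panIntegral mu G ≤ panIntegral mu (fun x => F x + G x) := by
  classical
  rw [panIntegral_eq_iSup_panVal F, panIntegral_eq_iSup_panVal G]
  refine ENNReal.iSup_add_iSup_le fun p q => ?_
  rw [panVal, panVal]
  split_ifs with h1 h2 h2
  · -- both admissible : common refinement
    obtain ⟨⟨hmA, hdA, hcA⟩, hleA⟩ := h1
    obtain ⟨⟨hmC, hdC, hcC⟩, hleC⟩ := h2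
    set A := p.2.1; set lam := p.2.2; set C := q.2.1; set kap := q.2.2
    set B : Fin p.1 × Fin q.1 → Set X := fun ij => A ij.1 ∩ C ij.2 with hB
    have hmB : ∀ ij, MeasurableSet (B ij) := fun ij => (hmA ij.1).inter (hmC ij.2)
    have hdB : Pairwise (Function.onFun Disjoint B) := by
      intro ij kl hne
      by_cases hik : ij.1 = kl.1
      · have hjl : ij.2 ≠ kl.2 := fun h => hne (Prod.ext hik h)
        exact Set.disjoint_of_subset Set.inter_subset_right Set.inter_subset_right (hdC hjl)
      · exact Set.disjoint_of_subset Set.inter_subset_left Set.inter_subset_left (hdA hik)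
    have hcB : (⋃ ij, B ij) = Set.univ := by
      refine Set.eq_univ_of_forall fun x => ?_
      have hxA : ∃ i, x ∈ A i := by
        have := hcA ▸ Set.mem_univ x
        rwa [Set.mem_iUnion] at this
      have hxC : ∃ j, x ∈ C j := by
        have := hcC ▸ Set.mem_univ x
        rwa [Set.mem_iUnion] at this
      obtain ⟨i, hi⟩ := hxA; obtain ⟨j, hj⟩ := hxC
      exact Set.mem_iUnion.mpr ⟨(i, j), hi, hj⟩
    set w : Fin p.1 × Fin q.1 → ℝ≥0 := fun ij => lam ij.1 + kap ij.2 with hw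
    have hlow : ∀ ij (x : X), x ∈ B ij → (w ij : ℝ≥0∞) ≤ F x + G x := by
      rintro ⟨i, j⟩ x ⟨hxi, hxj⟩
      have h1 : (lam i : ℝ≥0∞) ≤ F x := by
        refine le_trans ?_ (hleA x)
        have := Finset.single_le_sum (f := fun k => Set.indicator (A k)
          (fun _ => (lam k : ℝ≥0∞)) x) (fun k _ => zero_le) (Finset.mem_univ i)
        simpa [Set.indicator_of_mem hxi] using this
      have h2 : (kap j : ℝ≥0∞) ≤ G x := by
        refine le_trans ?_ (hleC x)
        have := Finset.single_le_sum (f := fun k => Set.indicator (C k)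
          (fun _ => (kap k : ℝ≥0∞)) x) (fun k _ => zero_le) (Finset.mem_univ j)
        simpa [Set.indicator_of_mem hxj] using this
      rw [hw, ENNReal.coe_add]
      exact add_le_add h1 h2
    have hkey := pan_le_panIntegral (mu := mu) (fun x => F x + G x) B hmB hdB hcB w
      (pan_sum_indicator_le B hdB w _ hlow)
    refine le_trans ?_ hkey
    have hsplit : ∑ ij, (w ij : ℝ≥0∞) * mu (B ij)
        = (∑ i, ∑ j, (lam i : ℝ≥0∞) * mu (B (i, j)))
          + ∑ i, ∑ j, (kap j : ℝ≥0∞) * mu (B (i, j)) := by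
      rw [← Finset.sum_add_distrib]
      rw [Fintype.sum_prod_type]
      refine Finset.sum_congr rfl fun i _ => ?_
      rw [← Finset.sum_add_distrib]
      refine Finset.sum_congr rfl fun j _ => ?_
      rw [hw, ENNReal.coe_add, add_mul]
    rw [hsplit]
    refine add_le_add ?_ ?_
    · refine Finset.sum_le_sum fun i _ => ?_
      rw [← Finset.mul_sum]
      refine mul_le_mul_right ?_ _
      have hAi : A i = ⋃ j, B (i, j) := by
        rw [hB]
        simp only
        rw [← Set.inter_iUnion, hcC, Set.inter_univ]
      rw [hAi]
      exact pan_mu_iUnion_le hmu hsub _ (fun j => hmB (i, j))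
    · rw [Finset.sum_comm]
      refine Finset.sum_le_sum fun j _ => ?_
      rw [← Finset.mul_sum]
      refine mul_le_mul_right ?_ _
      have hCj : C j = ⋃ i, B (i, j) := by
        rw [hB]
        simp only
        rw [← Set.iUnion_inter, hcA, Set.univ_inter]
      rw [hCj]
      exact pan_mu_iUnion_le hmu hsub _ (fun i => hmB (i, j))
  · -- second not admissible
    rw [add_zero]
    refine le_trans ?_ (pan_panIntegral_mono
      (fun x => (le_add_right le_rfl : F x ≤ F x + G x)))
    exact pan_le_panIntegral F p.2.1 h1.1.1 h1.1.2.1 h1.1.2.2 p.2.2 h1.2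
  · rw [zero_add]
    refine le_trans ?_ (pan_panIntegral_mono
      (fun x => (le_add_left le_rfl : G x ≤ F x + G x)))
    exact pan_le_panIntegral G q.2.1 h2.1.1 h2.1.2.1 h2.1.2.2 q.2.2 h2.2
  · simp

end Additivity

section Subadd
set_option linter.unusedSectionVars false
set_option maxHeartbeats 1000000

variable [MeasurableSpace X] {mu : Set X → ℝ≥0∞}

lemma pan_aux_limit (S R : ℝ≥0∞)
    (h : ∀ n : ℕ, (n : ℝ≥0∞) / ((n : ℝ≥0∞) + 1) * S ≤ R) : S ≤ R := by
  refine ENNReal.le_of_forall_lt_one_mul_le fun a ha => ?_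
  lift a to ℝ≥0 using ha.ne_top
  have ha1 : (a : ℝ) < 1 := by exact_mod_cast ha
  have ha0 : (0 : ℝ) ≤ a := a.coe_nonneg
  obtain ⟨n, hn⟩ := exists_nat_ge ((a : ℝ) / (1 - (a : ℝ)))
  refine le_trans (mul_le_mul_left ?_ S) (h n)
  have hc0 : (n : ℝ≥0∞) + 1 ≠ 0 := by
    intro h
    rw [add_eq_zero] at h
    exact one_ne_zero h.2
  rw [ENNReal.le_div_iff_mul_le (Or.inl hc0) (Or.inl (by simp))]
  have hreal : (a : ℝ) * ((n : ℝ) + 1) ≤ (n : ℝ) := by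
    have h1 : (0 : ℝ) < 1 - (a : ℝ) := by linarith
    rw [div_le_iff₀ h1] at hn
    nlinarith
  calc (a : ℝ≥0∞) * ((n : ℝ≥0∞) + 1) = ((a * (n + 1) : ℝ≥0) : ℝ≥0∞) := by push_cast; ring
    _ ≤ ((n : ℝ≥0) : ℝ≥0∞) := by
        rw [ENNReal.coe_le_coe, ← NNReal.coe_le_coe]
        push_cast
        exact hreal
    _ = (n : ℝ≥0∞) := by push_cast; rfl

lemma pan_panIntegral_subadd (hmu : MonotoneMeasure mu) (hsub : PanSubadditive mu)
    (F G : X → ℝ≥0∞) (hF : Measurable F) :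
    panIntegral mu (fun x => F x + G x) ≤ panIntegral mu F + panIntegral mu G := by
  classical
  rw [panIntegral]
  refine iSup_le fun m => iSup_le fun A => iSup_le fun hp => iSup_le fun lam =>
    iSup_le fun hle => ?_
  obtain ⟨hmA, hdA, hcA⟩ := hp
  refine pan_aux_limit _ _ fun n => ?_
  set N : ℕ := n + 1 with hN
  have hN0 : (N : ℝ≥0∞) ≠ 0 := by positivity
  have hNtop : (N : ℝ≥0∞) ≠ ⊤ := by simp
  -- the refined partition
  set R : Fin m × Fin (N + 1) → Set X := fun ik =>
    A ik.1 ∩ {x | ((ik.2 : ℕ) : ℝ≥0∞) / (N : ℝ≥0∞) * (lam ik.1 : ℝ≥0∞) ≤ F x} ∩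
      (if (ik.2 : ℕ) = N then Set.univ
        else {x | F x < (((ik.2 : ℕ) : ℝ≥0∞) + 1) / (N : ℝ≥0∞) * (lam ik.1 : ℝ≥0∞)}) with hR
  have hmR : ∀ ik, MeasurableSet (R ik) := by
    rintro ⟨i, k⟩
    refine ((hmA i).inter (measurableSet_le measurable_const hF)).inter ?_
    by_cases hk : (k : ℕ) = N
    · rw [if_pos hk]; exact MeasurableSet.univ
    · rw [if_neg hk]; exact measurableSet_lt hF measurable_const
  -- lower and upper bounds from membership
  have hmemA : ∀ i k x, x ∈ R (i, k) → x ∈ A i := fun i k x hx => hx.1.1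
  have hlow : ∀ i k x, x ∈ R (i, k) →
      ((k : ℕ) : ℝ≥0∞) / (N : ℝ≥0∞) * (lam i : ℝ≥0∞) ≤ F x := fun i k x hx => hx.1.2
  have hup : ∀ i k x, x ∈ R (i, k) → (k : ℕ) ≠ N →
      F x < (((k : ℕ) : ℝ≥0∞) + 1) / (N : ℝ≥0∞) * (lam i : ℝ≥0∞) := by
    intro i k x hx hk
    have := hx.2
    rwa [if_neg hk] at this
  -- disjointness
  have hdR : Pairwise (Function.onFun Disjoint R) := by
    intro ik jl hne
    by_cases hij : ik.1 = jl.1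
    · have hkl : ik.2 ≠ jl.2 := fun h => hne (Prod.ext hij h)
      have key : ∀ (i : Fin m) (k l : Fin (N + 1)), (k : ℕ) < (l : ℕ) →
          Disjoint (R (i, k)) (R (i, l)) := by
        intro i k l hkl'
        rw [Set.disjoint_left]
        intro x hxk hxl
        have hkN : (k : ℕ) ≠ N := by
          have := l.isLt
          omega
        have h1 := hup i k x hxk hkN
        have h2 := hlow i l x hxl
        have h3 : (((k : ℕ) : ℝ≥0∞) + 1) / (N : ℝ≥0∞) * (lam i : ℝ≥0∞)
            ≤ ((l : ℕ) : ℝ≥0∞) / (N : ℝ≥0∞) * (lam i : ℝ≥0∞) := by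
          refine mul_le_mul_left (ENNReal.div_le_div_right ?_ _) _
          have : ((k : ℕ) : ℝ≥0∞) + 1 = (((k : ℕ) + 1 : ℕ) : ℝ≥0∞) := by push_cast; ring
          rw [this]
          exact_mod_cast Nat.cast_le.mpr hkl'
        exact absurd (lt_of_lt_of_le h1 (h3.trans h2)) (lt_irrefl _)
      obtain ⟨i1, k1⟩ := ik
      obtain ⟨i2, k2⟩ := jl
      simp only at hij
      subst hij
      rcases lt_trichotomy (k1 : ℕ) (k2 : ℕ) with h | h | h
      · exact key _ _ _ h
      · exact absurd (Fin.ext h) hkl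
      · exact (key _ _ _ h).symm
    · refine Set.disjoint_of_subset ?_ ?_ (hdA hij)
      · exact fun x hx => hx.1.1
      · exact fun x hx => hx.1.1
  -- cover within each A i
  have hcell : ∀ (i : Fin m) (x : X), x ∈ A i → ∃ k : Fin (N + 1), x ∈ R (i, k) := by
    intro i x hxA
    set P : ℕ → Prop := fun k => ((k : ℕ) : ℝ≥0∞) / (N : ℝ≥0∞) * (lam i : ℝ≥0∞) ≤ F x with hP
    have hP0 : P 0 := by simp [hP]
    have hKle : Nat.findGreatest P N ≤ N := Nat.findGreatest_le N
    have hKspec : P (Nat.findGreatest P N) := Nat.findGreatest_spec (Nat.zero_le N) hP0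
    refine ⟨⟨Nat.findGreatest P N, lt_of_le_of_lt hKle (Nat.lt_succ_self N)⟩, ?_, ?_⟩
    · exact ⟨hxA, hKspec⟩
    · by_cases hK : Nat.findGreatest P N = N
      · simp [hK]
      · simp only
        rw [if_neg hK]
        have hlt : Nat.findGreatest P N < Nat.findGreatest P N + 1 := Nat.lt_succ_self _
        have hle1 : Nat.findGreatest P N + 1 ≤ N := by omega
        have hnP := Nat.findGreatest_is_greatest hlt hle1
        have hnP' : ¬ (((Nat.findGreatest P N + 1 : ℕ) : ℝ≥0∞) / (N : ℝ≥0∞)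
            * (lam i : ℝ≥0∞) ≤ F x) := hnP
        push_neg at hnP'
        rw [Nat.cast_add_one] at hnP'
        exact hnP'
  have hAeq : ∀ i : Fin m, A i = ⋃ k : Fin (N + 1), R (i, k) := by
    intro i
    refine le_antisymm ?_ ?_
    · intro x hx
      obtain ⟨k, hk⟩ := hcell i x hx
      exact Set.mem_iUnion.mpr ⟨k, hk⟩
    · exact Set.iUnion_subset fun k x hx => hx.1.1
  have hcR : (⋃ ik, R ik) = Set.univ := by
    refine Set.eq_univ_of_forall fun x => ?_
    have hxA : ∃ i, x ∈ A i := by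
      have := hcA ▸ Set.mem_univ x
      rwa [Set.mem_iUnion] at this
    obtain ⟨i, hi⟩ := hxA
    obtain ⟨k, hk⟩ := hcell i x hi
    exact Set.mem_iUnion.mpr ⟨(i, k), hk⟩
  -- the weights
  set al : Fin m × Fin (N + 1) → ℝ≥0 := fun ik => ((ik.2 : ℕ) : ℝ≥0) / (N : ℝ≥0) * lam ik.1
    with hal
  set be : Fin m × Fin (N + 1) → ℝ≥0 :=
    fun ik => ((N - 1 - (ik.2 : ℕ) : ℕ) : ℝ≥0) / (N : ℝ≥0) * lam ik.1 with hbe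
  have hcast : ∀ (j : ℕ) (i : Fin m), ((((j : ℝ≥0) / (N : ℝ≥0) * lam i : ℝ≥0)) : ℝ≥0∞)
      = ((j : ℕ) : ℝ≥0∞) / (N : ℝ≥0∞) * (lam i : ℝ≥0∞) := by
    intro j i
    rw [ENNReal.coe_mul, ENNReal.coe_div (by positivity)]
    push_cast
    ring
  -- α is below F
  have halF : ∀ ik (x : X), x ∈ R ik → ((al ik : ℝ≥0)  : ℝ≥0∞) ≤ F x := by
    rintro ⟨i, k⟩ x hx
    rw [hal]
    simp only
    rw [hcast]
    exact hlow i k x hx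
  -- β is below G
  have hbeG : ∀ ik (x : X), x ∈ R ik → ((be ik : ℝ≥0) : ℝ≥0∞) ≤ G x := by
    rintro ⟨i, k⟩ x hx
    rw [hbe]
    simp only
    rw [hcast]
    by_cases hk : (k : ℕ) = N
    · rw [hk]
      have : N - 1 - N = 0 := by omega
      rw [this]
      simp
    · -- k < N
      have hxA := hmemA i k x hx
      have hupk := hup i k x hx hk
      have hlamFG : (lam i : ℝ≥0∞) ≤ F x + G x := by
        refine le_trans ?_ (hle x)
        have := Finset.single_le_sum (f := fun j => Set.indicator (A j)
          (fun _ => (lam j : ℝ≥0∞)) x) (fun j _ => zero_le) (Finset.mem_univ i)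
        simpa [Set.indicator_of_mem hxA] using this
      have hkN : (k : ℕ) < N := lt_of_le_of_ne (by have := k.isLt; omega) hk
      have hid : ((N - 1 - (k : ℕ) : ℕ) : ℝ≥0∞) / (N : ℝ≥0∞) * (lam i : ℝ≥0∞)
          + (((k : ℕ) : ℝ≥0∞) + 1) / (N : ℝ≥0∞) * (lam i : ℝ≥0∞) = (lam i : ℝ≥0∞) := by
        rw [← add_mul, ENNReal.div_add_div_same]
        have harith : ((N - 1 - (k : ℕ) : ℕ) : ℝ≥0∞) + (((k : ℕ) : ℝ≥0∞) + 1)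
            = (N : ℝ≥0∞) := by
          have : (N - 1 - (k : ℕ)) + ((k : ℕ) + 1) = N := by omega
          calc ((N - 1 - (k : ℕ) : ℕ) : ℝ≥0∞) + (((k : ℕ) : ℝ≥0∞) + 1)
              = (((N - 1 - (k : ℕ)) + ((k : ℕ) + 1) : ℕ) : ℝ≥0∞) := by push_cast; ring
            _ = (N : ℝ≥0∞) := by rw [this]
        rw [harith, ENNReal.div_self hN0 hNtop, one_mul]
      have hfin : (((k : ℕ) : ℝ≥0∞) + 1) / (N : ℝ≥0∞) * (lam i : ℝ≥0∞) ≠ ⊤ := by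
        refine ENNReal.mul_ne_top ?_ ENNReal.coe_ne_top
        rw [Ne, ENNReal.div_eq_top]
        push_neg
        exact ⟨fun _ => hN0, fun h => absurd h (by simp)⟩
      have hstep : (((k : ℕ) : ℝ≥0∞) + 1) / (N : ℝ≥0∞) * (lam i : ℝ≥0∞)
          + ((N - 1 - (k : ℕ) : ℕ) : ℝ≥0∞) / (N : ℝ≥0∞) * (lam i : ℝ≥0∞)
          ≤ (((k : ℕ) : ℝ≥0∞) + 1) / (N : ℝ≥0∞) * (lam i : ℝ≥0∞) + G x := by
        refine le_trans (le_of_eq ?_) (le_trans hlamFG (add_le_add_left hupk.le _))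
        rw [add_comm]
        exact hid
      exact (ENNReal.add_le_add_iff_left hfin).mp hstep
  -- both partitions are admissible
  have hvalF := pan_le_panIntegral (mu := mu) F R hmR hdR hcR al
    (pan_sum_indicator_le R hdR al F halF)
  have hvalG := pan_le_panIntegral (mu := mu) G R hmR hdR hcR be
    (pan_sum_indicator_le R hdR be G hbeG)
  refine le_trans ?_ (add_le_add hvalF hvalG)
  rw [← Finset.sum_add_distrib]
  -- pointwise bound: ((N-1)/N) * lam ≤ al + be
  have hptwise : ∀ ik : Fin m × Fin (N + 1),
      (n : ℝ≥0∞) / ((n : ℝ≥0∞) + 1) * ((lam ik.1 : ℝ≥0∞) * mu (R ik))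
        ≤ (al ik : ℝ≥0∞) * mu (R ik) + (be ik : ℝ≥0∞) * mu (R ik) := by
    rintro ⟨i, k⟩
    rw [← add_mul, ← mul_assoc]
    refine mul_le_mul_left ?_ _
    rw [hal, hbe]
    simp only
    rw [hcast, hcast]
    have hn1 : ((n : ℝ≥0∞) + 1) = (N : ℝ≥0∞) := by rw [hN]; push_cast; ring
    have hnum : (n : ℝ≥0∞) = ((N - 1 : ℕ) : ℝ≥0∞) := by rw [hN]; simp
    rw [hn1, hnum, ← add_mul, ENNReal.div_add_div_same]
    refine mul_le_mul_left (ENNReal.div_le_div_right ?_ _) _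
    have hc2 : ((k : ℕ) : ℝ≥0∞) + ((N - 1 - (k : ℕ) : ℕ) : ℝ≥0∞)
        = (((k : ℕ) + (N - 1 - (k : ℕ)) : ℕ) : ℝ≥0∞) := by push_cast; ring
    rw [hc2]
    exact Nat.cast_le.mpr (by omega)
  calc (n : ℝ≥0∞) / ((n : ℝ≥0∞) + 1) * ∑ i, (lam i : ℝ≥0∞) * mu (A i)
      ≤ (n : ℝ≥0∞) / ((n : ℝ≥0∞) + 1) * ∑ ik, (lam ik.1 : ℝ≥0∞) * mu (R ik) := by
        refine mul_le_mul_right ?_ _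
        rw [Fintype.sum_prod_type]
        refine Finset.sum_le_sum fun i _ => ?_
        dsimp only
        rw [← Finset.mul_sum]
        refine mul_le_mul_right ?_ _
        rw [hAeq i]
        exact pan_mu_iUnion_le hmu hsub _ (fun k => hmR (i, k))
    _ = ∑ ik, (n : ℝ≥0∞) / ((n : ℝ≥0∞) + 1) * ((lam ik.1 : ℝ≥0∞) * mu (R ik)) :=
        Finset.mul_sum _ _ _
    _ ≤ ∑ ik, ((al ik : ℝ≥0∞) * mu (R ik) + (be ik : ℝ≥0∞) * mu (R ik)) :=
        Finset.sum_le_sum fun ik _ => hptwise ik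

end Subadd

section RealPart
set_option linter.unusedSectionVars false
set_option maxHeartbeats 1000000

variable [MeasurableSpace X] {mu : Set X → ℝ≥0∞}

lemma pan_panIntegral_add (hmu : MonotoneMeasure mu) (hsub : PanSubadditive mu)
    (F G : X → ℝ≥0∞) (hF : Measurable F) :
    panIntegral mu (fun x => F x + G x) = panIntegral mu F + panIntegral mu G :=
  le_antisymm (pan_panIntegral_subadd hmu hsub F G hF)
    (pan_panIntegral_superadd hmu hsub F G)

lemma pan_ofReal_max (t : ℝ) : ENNReal.ofReal t = ENNReal.ofReal (max t 0) := by
  rcases le_total t 0 with h | h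
  · rw [max_eq_right h, ENNReal.ofReal_of_nonpos h, ENNReal.ofReal_zero]
  · rw [max_eq_left h]

lemma pan_ofReal_id (r s : ℝ) :
    ENNReal.ofReal (r + s) + (ENNReal.ofReal (-r) + ENNReal.ofReal (-s))
      = ENNReal.ofReal (-(r + s)) + (ENNReal.ofReal r + ENNReal.ofReal s) := by
  have key : max (r + s) 0 + (max (-r) 0 + max (-s) 0)
      = max (-(r + s)) 0 + (max r 0 + max s 0) := by
    simp only [max_def]
    split_ifs <;> linarith
  calc ENNReal.ofReal (r + s) + (ENNReal.ofReal (-r) + ENNReal.ofReal (-s))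
      = ENNReal.ofReal (max (r + s) 0 + (max (-r) 0 + max (-s) 0)) := by
        rw [pan_ofReal_max (r + s), pan_ofReal_max (-r), pan_ofReal_max (-s),
          ← ENNReal.ofReal_add (le_max_right _ _) (le_max_right _ _),
          ← ENNReal.ofReal_add (le_max_right _ _)
            (add_nonneg (le_max_right _ _) (le_max_right _ _))]
    _ = ENNReal.ofReal (max (-(r + s)) 0 + (max r 0 + max s 0)) := by rw [key]
    _ = ENNReal.ofReal (-(r + s)) + (ENNReal.ofReal r + ENNReal.ofReal s) := by
        rw [pan_ofReal_max (-(r + s)), pan_ofReal_max r, pan_ofReal_max s,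
          ← ENNReal.ofReal_add (le_max_right _ _) (le_max_right _ _),
          ← ENNReal.ofReal_add (le_max_right _ _)
            (add_nonneg (le_max_right _ _) (le_max_right _ _))]

lemma pan_real_add (hmu : MonotoneMeasure mu) (hsub : PanSubadditive mu)
    (u v : X → ℝ) (hu : Measurable u) (hv : Measurable v)
    (hui : PanIntegrable mu u) (hvi : PanIntegrable mu v) :
    PanIntegrable mu (fun x => u x + v x) ∧
      panIntegralReal mu (fun x => u x + v x)
        = panIntegralReal mu u + panIntegralReal mu v := by
  set Pu := panIntegral mu (fun x => ENNReal.ofReal (u x)) with hPu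
  set Nu := panIntegral mu (fun x => ENNReal.ofReal (-u x)) with hNu
  set Pv := panIntegral mu (fun x => ENNReal.ofReal (v x)) with hPv
  set Nv := panIntegral mu (fun x => ENNReal.ofReal (-v x)) with hNv
  set Ph := panIntegral mu (fun x => ENNReal.ofReal (u x + v x)) with hPh
  set Nh := panIntegral mu (fun x => ENNReal.ofReal (-(u x + v x))) with hNh
  have hPuT : Pu ≠ ⊤ := hui.1.ne
  have hNuT : Nu ≠ ⊤ := hui.2.ne
  have hPvT : Pv ≠ ⊤ := hvi.1.ne
  have hNvT : Nv ≠ ⊤ := hvi.2.ne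
  have hPhle : Ph ≤ Pu + Pv := by
    rw [hPh, hPu, hPv, ← pan_panIntegral_add hmu hsub _ _ hu.ennreal_ofReal]
    exact pan_panIntegral_mono fun x => ENNReal.ofReal_add_le
  have hNhle : Nh ≤ Nu + Nv := by
    rw [hNh, hNu, hNv, ← pan_panIntegral_add hmu hsub
      (fun x => ENNReal.ofReal (-u x)) _ hu.neg.ennreal_ofReal]
    refine pan_panIntegral_mono fun x => ?_
    rw [neg_add]
    exact ENNReal.ofReal_add_le
  have hPhT : Ph ≠ ⊤ :=
    (lt_of_le_of_lt hPhle (ENNReal.add_lt_top.mpr ⟨hui.1, hvi.1⟩)).ne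
  have hNhT : Nh ≠ ⊤ :=
    (lt_of_le_of_lt hNhle (ENNReal.add_lt_top.mpr ⟨hui.2, hvi.2⟩)).ne
  have hint : PanIntegrable mu (fun x => u x + v x) :=
    ⟨lt_top_iff_ne_top.mpr hPhT, lt_top_iff_ne_top.mpr hNhT⟩
  have hkey : Ph + (Nu + Nv) = Nh + (Pu + Pv) := by
    have hfun : (fun x => ENNReal.ofReal (u x + v x)
          + (ENNReal.ofReal (-u x) + ENNReal.ofReal (-v x)))
        = (fun x => ENNReal.ofReal (-(u x + v x))
          + (ENNReal.ofReal (u x) + ENNReal.ofReal (v x))) :=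
      funext fun x => pan_ofReal_id (u x) (v x)
    have h1 : panIntegral mu (fun x => ENNReal.ofReal (u x + v x)
          + (ENNReal.ofReal (-u x) + ENNReal.ofReal (-v x))) = Ph + (Nu + Nv) := by
      rw [pan_panIntegral_add hmu hsub
          (fun x => ENNReal.ofReal (u x + v x)) _ (hu.add hv).ennreal_ofReal,
        pan_panIntegral_add hmu hsub
          (fun x => ENNReal.ofReal (-u x)) _ hu.neg.ennreal_ofReal]
    have h2 : panIntegral mu (fun x => ENNReal.ofReal (-(u x + v x))
          + (ENNReal.ofReal (u x) + ENNReal.ofReal (v x))) = Nh + (Pu + Pv) := by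
      rw [pan_panIntegral_add hmu hsub
          (fun x => ENNReal.ofReal (-(u x + v x))) _ (hu.add hv).neg.ennreal_ofReal,
        pan_panIntegral_add hmu hsub _ _ hu.ennreal_ofReal]
    rw [← h1, ← h2, hfun]
  refine ⟨hint, ?_⟩
  have htr := congrArg ENNReal.toReal hkey
  rw [ENNReal.toReal_add hPhT (ENNReal.add_ne_top.mpr ⟨hNuT, hNvT⟩),
    ENNReal.toReal_add hNhT (ENNReal.add_ne_top.mpr ⟨hPuT, hPvT⟩),
    ENNReal.toReal_add hNuT hNvT, ENNReal.toReal_add hPuT hPvT] at htr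
  show Ph.toReal - Nh.toReal = (Pu.toReal - Nu.toReal) + (Pv.toReal - Nv.toReal)
  linarith

lemma pan_real_smul (hmu : MonotoneMeasure mu) (hsub : PanSubadditive mu)
    (a : ℝ) (u : X → ℝ) (hu : Measurable u) (hui : PanIntegrable mu u) :
    PanIntegrable mu (fun x => a * u x) ∧
      panIntegralReal mu (fun x => a * u x) = a * panIntegralReal mu u := by
  set Pu := panIntegral mu (fun x => ENNReal.ofReal (u x)) with hPu
  set Nu := panIntegral mu (fun x => ENNReal.ofReal (-u x)) with hNu
  have hPuT : Pu ≠ ⊤ := hui.1.ne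
  have hNuT : Nu ≠ ⊤ := hui.2.ne
  rcases le_or_gt 0 a with ha | ha
  · have hc : ENNReal.ofReal a = ((a.toNNReal : ℝ≥0) : ℝ≥0∞) := rfl
    have h1 : (fun x => ENNReal.ofReal (a * u x))
        = fun x => ((a.toNNReal : ℝ≥0) : ℝ≥0∞) * ENNReal.ofReal (u x) := by
      funext x
      rw [ENNReal.ofReal_mul ha, hc]
    have h2 : (fun x => ENNReal.ofReal (-(a * u x)))
        = fun x => ((a.toNNReal : ℝ≥0) : ℝ≥0∞) * ENNReal.ofReal (-u x) := by
      funext x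
      rw [show -(a * u x) = a * (-u x) by ring, ENNReal.ofReal_mul ha, hc]
    have hP : panIntegral mu (fun x => ENNReal.ofReal (a * u x))
        = ((a.toNNReal : ℝ≥0) : ℝ≥0∞) * Pu := by
      rw [h1, pan_panIntegral_smul hmu]
    have hN : panIntegral mu (fun x => ENNReal.ofReal (-(a * u x)))
        = ((a.toNNReal : ℝ≥0) : ℝ≥0∞) * Nu := by
      rw [h2, pan_panIntegral_smul hmu]
    constructor
    · constructor
      · rw [hP]; exact ENNReal.mul_lt_top ENNReal.coe_lt_top (lt_top_iff_ne_top.mpr hPuT)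
      · rw [hN]; exact ENNReal.mul_lt_top ENNReal.coe_lt_top (lt_top_iff_ne_top.mpr hNuT)
    · show (panIntegral mu (fun x => ENNReal.ofReal (a * u x))).toReal
          - (panIntegral mu (fun x => ENNReal.ofReal (-(a * u x)))).toReal
          = a * (Pu.toReal - Nu.toReal)
      rw [hP, hN, ENNReal.toReal_mul, ENNReal.toReal_mul, ENNReal.coe_toReal,
        Real.coe_toNNReal a ha]
      ring
  · have ha' : (0 : ℝ) ≤ -a := by linarith
    have hc : ENNReal.ofReal (-a) = (((-a).toNNReal : ℝ≥0) : ℝ≥0∞) := rfl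
    have h1 : (fun x => ENNReal.ofReal (a * u x))
        = fun x => (((-a).toNNReal : ℝ≥0) : ℝ≥0∞) * ENNReal.ofReal (-u x) := by
      funext x
      rw [show a * u x = (-a) * (-u x) by ring, ENNReal.ofReal_mul ha', hc]
    have h2 : (fun x => ENNReal.ofReal (-(a * u x)))
        = fun x => (((-a).toNNReal : ℝ≥0) : ℝ≥0∞) * ENNReal.ofReal (u x) := by
      funext x
      rw [show -(a * u x) = (-a) * u x by ring, ENNReal.ofReal_mul ha', hc]
    have hP : panIntegral mu (fun x => ENNReal.ofReal (a * u x))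
        = (((-a).toNNReal : ℝ≥0) : ℝ≥0∞) * Nu := by
      rw [h1, pan_panIntegral_smul hmu]
    have hN : panIntegral mu (fun x => ENNReal.ofReal (-(a * u x)))
        = (((-a).toNNReal : ℝ≥0) : ℝ≥0∞) * Pu := by
      rw [h2, pan_panIntegral_smul hmu]
    constructor
    · constructor
      · rw [hP]; exact ENNReal.mul_lt_top ENNReal.coe_lt_top (lt_top_iff_ne_top.mpr hNuT)
      · rw [hN]; exact ENNReal.mul_lt_top ENNReal.coe_lt_top (lt_top_iff_ne_top.mpr hPuT)
    · show (panIntegral mu (fun x => ENNReal.ofReal (a * u x))).toReal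
          - (panIntegral mu (fun x => ENNReal.ofReal (-(a * u x)))).toReal
          = a * (Pu.toReal - Nu.toReal)
      rw [hP, hN, ENNReal.toReal_mul, ENNReal.toReal_mul, ENNReal.coe_toReal,
        Real.coe_toNNReal (-a) ha']
      ring

end RealPart

theorem panIntegralReal_linear [MeasurableSpace X]
    (mu : Set X → ℝ≥0∞) (hmu : MonotoneMeasure mu) (hsub : PanSubadditive mu)
    (f g : X → ℝ) (hf : Measurable f) (hg : Measurable g)
    (hfi : PanIntegrable mu f) (hgi : PanIntegrable mu g) (a b : ℝ) :
    PanIntegrable mu (fun x => a * f x + b * g x) ∧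
      panIntegralReal mu (fun x => a * f x + b * g x) =
        a * panIntegralReal mu f + b * panIntegralReal mu g := by
  
  obtain ⟨haf, hafv⟩ := pan_real_smul hmu hsub a f hf hfi
  obtain ⟨hbg, hbgv⟩ := pan_real_smul hmu hsub b g hg hgi
  obtain ⟨hsum, hsumv⟩ := pan_real_add hmu hsub _ _ (hf.const_mul a) (hg.const_mul b) haf hbg
  exact ⟨hsum, by rw [hsumv, hafv, hbgv]⟩
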